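/- arXiv:1612.09451 — 5 statements merged into one kernel-verified Lean document; each statement's English description precedes it below -/
import Mathlib

section
/- Let F be a complex Banach space, let U ⊆ ℂⁿ be open, and let s : U → F be holomorphic (i.e. DifferentiableOn ℂ). Let u ∈ U, v ∈ ℂⁿ and ρ > 0 be such that the closed disk {u + t·v : t ∈ ℂ, |t| ≤ ρ} is contained in U. Then e^{‖u‖²/2}·‖s(u)‖² ≤ (1/(2π))·∫₀^{2π} e^{‖u + ρe^{iθ}v‖²/2}·‖s(u + ρe^{iθ}v)‖² dθ. (Equivalently: the function u ↦ e^{‖u‖²/2}‖s(u)‖², which is the squared norm of s in the Hermitian metric obtained by multiplying the standard fibre metric by e^{‖u‖²/2}, satisfies the sub-mean value inequality along every complex line, i.e. it is plurisubharmonic.) -/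
/-!
Statement 5 (analytic core of Lemma 5.1 / Proposition 5.3 of the paper): for a holomorphic map
`s : U → F` into a complex Banach space, the weighted squared norm `u ↦ e^{‖u‖²/2}·‖s(u)‖²`
satisfies the sub-mean value inequality on every closed complex disk contained in `U`.
-/

open MeasureTheory Metric Complex intervalIntegral

/-- Mean value inequality for the norm of a holomorphic function on a closed disk. -/
lemma mean_value_norm_aux {F : Type*} [NormedAddCommGroup F] [NormedSpace ℂ F] [CompleteSpace F]
    {g : ℂ → F} {ρ : ℝ} (hρ : 0 < ρ)
    (hg : ∀ t ∈ closedBall (0:ℂ) ρ, DifferentiableAt ℂ g t) :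
    ‖g 0‖ ≤ (2 * Real.pi)⁻¹ * ∫ θ in (0:ℝ)..(2*Real.pi), ‖g (circleMap 0 ρ θ)‖ := by
  have hd : DiffContOnCl ℂ g (ball (0:ℂ) ρ) := by
    refine ⟨fun t ht => (hg t (ball_subset_closedBall ht)).differentiableWithinAt, ?_⟩
    rw [closure_ball (0:ℂ) hρ.ne']
    exact fun t ht => (hg t ht).continuousAt.continuousWithinAt
  have h0 : (0:ℂ) ∈ ball (0:ℂ) ρ := by simpa using hρ
  have key := hd.circleIntegral_sub_inv_smul h0
  have heq : (∮ z in C(0, ρ), (z - 0)⁻¹ • g z)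
      = ∫ θ in (0:ℝ)..(2*Real.pi), I • g (circleMap 0 ρ θ) := by
    rw [circleIntegral]
    congr 1
    funext θ
    rw [deriv_circleMap, sub_zero, smul_smul]
    congr 1
    have hne : circleMap 0 ρ θ ≠ 0 := by
      simpa [circleMap_eq_center_iff] using hρ.ne'
    field_simp
  have h2 : (2*Real.pi) * ‖g 0‖ ≤ ∫ θ in (0:ℝ)..(2*Real.pi), ‖g (circleMap 0 ρ θ)‖ := by
    calc (2*Real.pi) * ‖g 0‖ = ‖(2 * (Real.pi:ℂ) * I) • g 0‖ := by
          rw [norm_smul]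
          simp [_root_.abs_of_nonneg Real.pi_pos.le]
      _ = ‖∫ θ in (0:ℝ)..(2*Real.pi), I • g (circleMap 0 ρ θ)‖ := by rw [← key, heq]
      _ ≤ ∫ θ in (0:ℝ)..(2*Real.pi), ‖I • g (circleMap 0 ρ θ)‖ :=
          intervalIntegral.norm_integral_le_integral_norm (by positivity)
      _ = ∫ θ in (0:ℝ)..(2*Real.pi), ‖g (circleMap 0 ρ θ)‖ := by simp [norm_smul]
  rw [inv_mul_eq_div, le_div_iff₀ (by positivity)]
  linarith

/-- Jensen: square of average ≤ average of squares, on [0, 2π]. -/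
lemma jensen_sq_aux {φ : ℝ → ℝ} (hφ : ContinuousOn φ (Set.uIcc 0 (2*Real.pi))) :
    ((2*Real.pi)⁻¹ * ∫ θ in (0:ℝ)..(2*Real.pi), φ θ)^2
      ≤ (2*Real.pi)⁻¹ * ∫ θ in (0:ℝ)..(2*Real.pi), (φ θ)^2 := by
  set m := (2*Real.pi)⁻¹ * ∫ θ in (0:ℝ)..(2*Real.pi), φ θ with hm
  have hint : IntervalIntegrable φ volume 0 (2*Real.pi) := hφ.intervalIntegrable
  have hint2 : IntervalIntegrable (fun θ => (φ θ)^2) volume 0 (2*Real.pi) :=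
    (hφ.pow 2).intervalIntegrable
  have h0 : (0:ℝ) ≤ ∫ θ in (0:ℝ)..(2*Real.pi), (φ θ - m)^2 :=
    intervalIntegral.integral_nonneg (by positivity) (fun x _ => sq_nonneg _)
  have hval : ∫ θ in (0:ℝ)..(2*Real.pi), φ θ = 2*Real.pi*m := by
    rw [hm]
    field_simp
  have hexp : ∫ θ in (0:ℝ)..(2*Real.pi), (φ θ - m)^2
      = (∫ θ in (0:ℝ)..(2*Real.pi), (φ θ)^2) - 2*Real.pi*m^2 := by
    have h : ∀ θ : ℝ, (φ θ - m)^2 = ((φ θ)^2 - (2*m)*φ θ) + m^2 := fun θ => by ring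
    simp_rw [h]
    rw [intervalIntegral.integral_add (hint2.sub ((hint.const_mul (2*m))))
        intervalIntegrable_const,
      intervalIntegral.integral_sub hint2 (hint.const_mul (2*m)),
      intervalIntegral.integral_const_mul, intervalIntegral.integral_const, hval,
      smul_eq_mul]
    ring
  have hπ : 0 < 2*Real.pi := by positivity
  rw [hexp] at h0
  rw [inv_mul_eq_div, le_div_iff₀ hπ]
  nlinarith [h0]

theorem stmt_5 (n : ℕ) {F : Type*} [NormedAddCommGroup F] [NormedSpace ℂ F] [CompleteSpace F]
    (U : Set (EuclideanSpace ℂ (Fin n))) (hU : IsOpen U)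
    (s : EuclideanSpace ℂ (Fin n) → F) (hs : DifferentiableOn ℂ s U)
    (u v : EuclideanSpace ℂ (Fin n)) (ρ : ℝ) (hρ : 0 < ρ)
    (hdisk : ∀ t : ℂ, ‖t‖ ≤ ρ → u + t • v ∈ U) :
    Real.exp (‖u‖ ^ 2 / 2) * ‖s u‖ ^ 2 ≤
      (1 / (2 * Real.pi)) *
        ∫ θ in (0:ℝ)..(2 * Real.pi),
          Real.exp (‖u + ((ρ : ℂ) * Complex.exp (θ * Complex.I)) • v‖ ^ 2 / 2) *
            ‖s (u + ((ρ : ℂ) * Complex.exp (θ * Complex.I)) • v)‖ ^ 2 := by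
  set c : ℂ := (inner ℂ u v : ℂ) with hc
  set g : ℂ → F := fun t => Complex.exp (((‖u‖^2/4 : ℝ) : ℂ) + (c * t)/2) • s (u + t • v)
    with hgdef
  -- the squared norm of g
  have hnorm : ∀ t : ℂ, ‖g t‖^2
      = Real.exp ((‖u + t•v‖^2 - ‖t‖^2*‖v‖^2)/2) * ‖s (u + t•v)‖^2 := by
    intro t
    have h1 : ‖u + t•v‖^2 = ‖u‖^2 + 2*(c*t).re + ‖t‖^2*‖v‖^2 := by
      rw [@norm_add_sq ℂ, inner_smul_right, norm_smul, mul_pow]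
      simp [hc, mul_comm]
    have h2 : ‖Complex.exp (((‖u‖^2/4 : ℝ) : ℂ) + (c * t)/2)‖^2
        = Real.exp (‖u‖^2/2 + (c*t).re) := by
      rw [Complex.norm_exp, sq, ← Real.exp_add]
      congr 1
      simp [Complex.add_re, Complex.div_re, ← Complex.ofReal_pow]
      ring
    rw [hgdef]
    simp only [norm_smul, mul_pow]
    rw [h2, h1]
    ring_nf
  -- differentiability of g on the closed disk
  have hdiff : ∀ t ∈ closedBall (0:ℂ) ρ, DifferentiableAt ℂ g t := by
    intro t ht
    rw [mem_closedBall, dist_zero_right] at ht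
    have h1 : DifferentiableAt ℂ (fun t : ℂ => u + t • v) t :=
      (differentiableAt_id.smul_const v).const_add u
    have h2 : DifferentiableAt ℂ s (u + t • v) :=
      hs.differentiableAt (hU.mem_nhds (hdisk t ht))
    have h3 : DifferentiableAt ℂ
        (fun t : ℂ => Complex.exp (((‖u‖^2/4 : ℝ) : ℂ) + (c * t)/2)) t :=
      Complex.differentiable_exp.differentiableAt.comp t
        (((differentiableAt_id.const_mul c).div_const 2).const_add _)
    exact h3.smul (h2.comp t h1)
  -- continuity of the composite with circleMap
  have hcontg : ContinuousOn (fun θ : ℝ => g (circleMap 0 ρ θ)) (Set.uIcc 0 (2*Real.pi)) := by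
    have hmem : ∀ θ : ℝ, circleMap 0 ρ θ ∈ closedBall (0:ℂ) ρ := fun θ => by
      simp [abs_of_pos hρ]
    exact (fun θ _ => ((hdiff _ (hmem θ)).continuousAt.comp
      (continuous_circleMap 0 ρ).continuousAt).continuousWithinAt)
  have hA := mean_value_norm_aux hρ hdiff
  have hB := jensen_sq_aux (φ := fun θ => ‖g (circleMap 0 ρ θ)‖) hcontg.norm
  -- pointwise comparison and integrability for the last step
  have hmem' : ∀ θ : ℝ, u + circleMap 0 ρ θ • v ∈ U := fun θ =>
    hdisk _ (by simp [abs_of_pos hρ])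
  have hcontRHS : ContinuousOn
      (fun θ : ℝ => Real.exp (‖u + circleMap 0 ρ θ • v‖^2/2) * ‖s (u + circleMap 0 ρ θ • v)‖^2)
      (Set.uIcc 0 (2*Real.pi)) := by
    have hp : Continuous (fun θ : ℝ => u + circleMap 0 ρ θ • v) :=
      continuous_const.add ((continuous_circleMap 0 ρ).smul continuous_const)
    have hsc : ContinuousOn (fun θ : ℝ => s (u + circleMap 0 ρ θ • v))
        (Set.uIcc 0 (2*Real.pi)) :=
      hs.continuousOn.comp hp.continuousOn (fun θ _ => hmem' θ)
    exact ((Real.continuous_exp.comp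
      ((hp.norm.pow 2).div_const 2)).continuousOn).mul (hsc.norm.pow 2)
  have hmono : (∫ θ in (0:ℝ)..(2*Real.pi), ‖g (circleMap 0 ρ θ)‖^2)
      ≤ ∫ θ in (0:ℝ)..(2*Real.pi),
          Real.exp (‖u + circleMap 0 ρ θ • v‖^2/2) * ‖s (u + circleMap 0 ρ θ • v)‖^2 := by
    refine intervalIntegral.integral_mono_on (by positivity)
      ((hcontg.norm.pow 2).intervalIntegrable) (hcontRHS.intervalIntegrable) (fun θ _ => ?_)
    rw [hnorm]
    have hρθ : ‖circleMap 0 ρ θ‖ = ρ := by simp [abs_of_pos hρ]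
    refine mul_le_mul_of_nonneg_right (Real.exp_le_exp.2 ?_) (by positivity)
    rw [hρθ]
    nlinarith [sq_nonneg ρ, sq_nonneg ‖v‖, mul_nonneg (sq_nonneg ρ) (sq_nonneg ‖v‖)]
  have hg0 : Real.exp (‖u‖^2/2) * ‖s u‖^2 = ‖g 0‖^2 := by
    have := hnorm 0
    simpa using this.symm
  calc Real.exp (‖u‖ ^ 2 / 2) * ‖s u‖ ^ 2 = ‖g 0‖^2 := hg0
    _ ≤ ((2*Real.pi)⁻¹ * ∫ θ in (0:ℝ)..(2*Real.pi), ‖g (circleMap 0 ρ θ)‖)^2 :=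
        pow_le_pow_left₀ (norm_nonneg _) hA 2
    _ ≤ (2*Real.pi)⁻¹ * ∫ θ in (0:ℝ)..(2*Real.pi), ‖g (circleMap 0 ρ θ)‖^2 := hB
    _ ≤ (2*Real.pi)⁻¹ * ∫ θ in (0:ℝ)..(2*Real.pi),
          Real.exp (‖u + circleMap 0 ρ θ • v‖^2/2) * ‖s (u + circleMap 0 ρ θ • v)‖^2 := by
        have h2π : (0:ℝ) ≤ (2*Real.pi)⁻¹ := by positivity
        exact mul_le_mul_of_nonneg_left hmono h2π
    _ = (1 / (2 * Real.pi)) *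
        ∫ θ in (0:ℝ)..(2 * Real.pi),
          Real.exp (‖u + ((ρ : ℂ) * Complex.exp (θ * Complex.I)) • v‖ ^ 2 / 2) *
            ‖s (u + ((ρ : ℂ) * Complex.exp (θ * Complex.I)) • v)‖ ^ 2 := by
        rw [one_div]
        simp only [circleMap_zero]
end

section
/- Let n ≥ 2, let 0 < r < 1, let F be a complex Banach space, let U ⊆ ℂⁿ be an open neighborhood of the closed annulus Ω_{r,1}, and let s : U → F be holomorphic (DifferentiableOn ℂ). Then sup_{u ∈ Ω_{r,1}} e^{‖u‖²/4}·‖s(u)‖ = sup_{u ∈ S} e^{‖u‖²/4}·‖s(u)‖, i.e. the norm of s with respect to the Hermitian metric obtained by multiplying the standard fibre metric by e^{‖u‖²/2} attains its supremum over the annulus on the outer unit sphere. -/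
/-!
Statement 6 (Proposition 5.3 of the paper for the unperturbed holomorphic structure): for a
holomorphic map `s` on a neighbourhood of the closed annulus `Ω_{r,1} ⊆ ℂⁿ` (`n ≥ 2`) with
values in a complex Banach space, the weighted norm `e^{‖u‖²/4}·‖s(u)‖` attains its supremum
over the annulus on the outer unit sphere.
-/

open scoped InnerProductSpace in
theorem stmt_6 (n : ℕ) (hn : 2 ≤ n) (r : ℝ) (hr0 : 0 < r) (hr1 : r < 1)
    {F : Type*} [NormedAddCommGroup F] [NormedSpace ℂ F] [CompleteSpace F]
    (U : Set (EuclideanSpace ℂ (Fin n))) (hU : IsOpen U)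
    (hΩU : {u : EuclideanSpace ℂ (Fin n) | r ≤ ‖u‖ ∧ ‖u‖ ≤ 1} ⊆ U)
    (s : EuclideanSpace ℂ (Fin n) → F) (hs : DifferentiableOn ℂ s U) :
    sSup ((fun u => Real.exp (‖u‖ ^ 2 / 4) * ‖s u‖) ''
        {u : EuclideanSpace ℂ (Fin n) | r ≤ ‖u‖ ∧ ‖u‖ ≤ 1}) =
      sSup ((fun u => Real.exp (‖u‖ ^ 2 / 4) * ‖s u‖) ''
        {u : EuclideanSpace ℂ (Fin n) | ‖u‖ = 1}) := by
  let E := EuclideanSpace ℂ (Fin n)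
  set g : E → ℝ := fun u => Real.exp (‖u‖ ^ 2 / 4) * ‖s u‖ with hg
  set A : Set E := {u : E | r ≤ ‖u‖ ∧ ‖u‖ ≤ 1} with hA
  set Sp : Set E := {u : E | ‖u‖ = 1} with hSp
  have hSpA : Sp ⊆ A := fun u hu => ⟨hu ▸ hr1.le, hu.le⟩
  -- Sp is the metric sphere, hence compact
  have hSpEq : Sp = Metric.sphere (0 : E) 1 := by
    ext u; simp [hSp, mem_sphere_zero_iff_norm]
  have hSpC : IsCompact Sp := hSpEq ▸ isCompact_sphere 0 1
  have hAC : IsCompact A := by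
    have hclosed : IsClosed A := by
      have : A = (fun u : E => ‖u‖) ⁻¹' Set.Icc r 1 := rfl
      rw [this]; exact isClosed_Icc.preimage continuous_norm
    have hbdd : Bornology.IsBounded A := by
      apply Bornology.IsBounded.subset (Metric.isBounded_closedBall (x := (0:E)) (r := 1))
      intro u hu; simpa [Metric.mem_closedBall, dist_zero_right] using hu.2
    exact Metric.isCompact_of_isClosed_isBounded hclosed hbdd
  -- a point on the sphere
  have hnpos : 0 < n := by omega
  have hx1 : ∃ x : E, ‖x‖ = 1 := by
    refine ⟨EuclideanSpace.single (⟨0, hnpos⟩ : Fin n) (1 : ℂ), ?_⟩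
    rw [EuclideanSpace.norm_single]
    exact norm_one
  obtain ⟨x₁, hx₁⟩ := hx1
  have hSpne : Sp.Nonempty := ⟨x₁, hx₁⟩
  have hAne : A.Nonempty := ⟨x₁, hSpA hx₁⟩
  have hgcont : ContinuousOn g U := by
    apply ContinuousOn.mul
    · exact ((Real.continuous_exp.comp ((continuous_norm.pow 2).div_const 4))).continuousOn
    · exact hs.continuousOn.norm
  have hbddA : BddAbove (g '' A) := hAC.bddAbove_image (hgcont.mono hΩU)
  have hbddS : BddAbove (g '' Sp) :=
    hSpC.bddAbove_image (hgcont.mono (fun u hu => hΩU (hSpA hu)))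
  refine le_antisymm ?_ (csSup_le_csSup hbddA (hSpne.image g) (Set.image_mono (f := g) hSpA))
  refine csSup_le (hAne.image g) ?_
  rintro _ ⟨u, ⟨hur, hu1⟩, rfl⟩
  -- construct w orthogonal to u with ‖w‖ = √(1 - ‖u‖²)
  have horth : ∃ w : E, ⟪u, w⟫_ℂ = 0 ∧ ‖w‖ = Real.sqrt (1 - ‖u‖ ^ 2) := by
    have hne_top : (ℂ ∙ u) ≠ ⊤ := by
      intro h
      have h1 : Module.finrank ℂ (ℂ ∙ u) ≤ 1 := finrank_span_le_card ({u} : Set E)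
      have h2 : Module.finrank ℂ E = n := by
        simp [E, finrank_euclideanSpace]
      rw [h, finrank_top, h2] at h1
      omega
    have hbot : (ℂ ∙ u)ᗮ ≠ ⊥ := by
      intro h
      exact hne_top ((Submodule.orthogonal_eq_bot_iff).mp h)
    obtain ⟨w₀, hw₀mem, hw₀ne⟩ := Submodule.exists_mem_ne_zero_of_ne_bot hbot
    have hw₀n : (0:ℝ) < ‖w₀‖ := norm_pos_iff.mpr hw₀ne
    refine ⟨((Real.sqrt (1 - ‖u‖ ^ 2) / ‖w₀‖ : ℝ) : ℂ) • w₀, ?_, ?_⟩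
    · rw [inner_smul_right]
      have : ⟪u, w₀⟫_ℂ = 0 :=
        (Submodule.mem_orthogonal (ℂ ∙ u) w₀).mp hw₀mem u (Submodule.mem_span_singleton_self u)
      rw [this, mul_zero]
    · rw [norm_smul]
      have hs0 : 0 ≤ Real.sqrt (1 - ‖u‖ ^ 2) := Real.sqrt_nonneg _
      rw [Complex.norm_real]
      rw [Real.norm_eq_abs, abs_div, abs_of_nonneg hs0, abs_of_pos hw₀n]
      field_simp
  obtain ⟨w, hwo, hwn⟩ := horth
  have hw2 : ‖w‖ ^ 2 = 1 - ‖u‖ ^ 2 := by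
    rw [hwn, Real.sq_sqrt]
    nlinarith
  set f : ℂ → E := fun z => u + z • w with hf
  have hfnorm : ∀ z : ℂ, ‖f z‖ ^ 2 = ‖u‖ ^ 2 + ‖z‖ ^ 2 * ‖w‖ ^ 2 := by
    intro z
    have ho : ⟪u, z • w⟫_ℂ = 0 := by rw [inner_smul_right, hwo, mul_zero]
    have := norm_add_sq (𝕜 := ℂ) u (z • w)
    rw [ho] at this
    simpa [norm_smul, mul_pow] using this
  -- f maps the closed ball into the annulus and the unit circle to the sphere
  have hmaps : ∀ z : ℂ, ‖z‖ ≤ 1 → f z ∈ A := by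
    intro z hz
    have h1 := hfnorm z
    have hz2 : ‖z‖ ^ 2 ≤ 1 := by nlinarith [norm_nonneg z]
    have hfz := norm_nonneg (f z)
    constructor
    · nlinarith [norm_nonneg z, sq_nonneg ‖w‖]
    · nlinarith [sq_nonneg ‖z‖]
  have hsph : ∀ z : ℂ, ‖z‖ = 1 → ‖f z‖ = 1 := by
    intro z hz
    have h1 := hfnorm z
    rw [hz, hw2] at h1
    have hfz := norm_nonneg (f z)
    nlinarith
  -- s ∘ f is DiffContOnCl on the unit ball
  have hfd : Differentiable ℂ f := (differentiable_id.smul_const w).const_add u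
  have hmapsU : Set.MapsTo f (Metric.closedBall (0:ℂ) 1) U := by
    intro z hz
    rw [Metric.mem_closedBall, dist_zero_right] at hz
    exact hΩU (hmaps z hz)
  have hdc : DiffContOnCl ℂ (s ∘ f) (Metric.ball (0:ℂ) 1) := by
    constructor
    · apply DifferentiableOn.comp hs (hfd.differentiableOn)
      intro z hz
      exact hmapsU (Metric.ball_subset_closedBall hz)
    · rw [closure_ball (0:ℂ) one_ne_zero]
      exact (hs.continuousOn.comp hfd.continuous.continuousOn hmapsU)
  -- pick the maximum of ‖s ∘ f‖ on the unit circle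
  obtain ⟨z₀, hz₀mem, hz₀max⟩ := (isCompact_sphere (0:ℂ) 1).exists_isMaxOn
    ⟨1, by simp⟩
    (hs.continuousOn.comp hfd.continuous.continuousOn
      (fun z hz => hmapsU (Metric.sphere_subset_closedBall hz))).norm
  have hz₀1 : ‖z₀‖ = 1 := by rwa [Metric.mem_sphere, dist_zero_right] at hz₀mem
  -- maximum modulus principle
  have hmm : ‖s (f 0)‖ ≤ ‖(s ∘ f) z₀‖ := by
    apply Complex.norm_le_of_forall_mem_frontier_norm_le Metric.isBounded_ball hdc
    · intro z hz
      rw [frontier_ball (0:ℂ) one_ne_zero] at hz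
      exact hz₀max hz
    · rw [closure_ball (0:ℂ) one_ne_zero]
      simp
  have hf0 : f 0 = u := by simp [hf]
  rw [hf0] at hmm
  -- conclude
  have hkey : g u ≤ g (f z₀) := by
    simp only [hg]
    rw [hsph z₀ hz₀1]
    have h1 : Real.exp (‖u‖ ^ 2 / 4) ≤ Real.exp ((1:ℝ) ^ 2 / 4) := by
      apply Real.exp_le_exp.mpr
      have : ‖u‖ ^ 2 ≤ 1 := by nlinarith
      nlinarith
    calc Real.exp (‖u‖ ^ 2 / 4) * ‖s u‖
        ≤ Real.exp ((1:ℝ) ^ 2 / 4) * ‖(s ∘ f) z₀‖ := by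
          apply mul_le_mul h1 hmm (norm_nonneg _) (Real.exp_pos _).le
      _ = Real.exp ((1:ℝ) ^ 2 / 4) * ‖s (f z₀)‖ := rfl
  refine hkey.trans (le_csSup hbddS ?_)
  exact ⟨f z₀, hsph z₀ hz₀1, rfl⟩
end

section
/- Let n ≥ 2, let 0 < r < 1, let F be a complex Banach space, let U ⊆ ℂⁿ be an open neighborhood of the closed annulus Ω_{r,1}, and let s : U → F be holomorphic (DifferentiableOn ℂ). Then sup_{u ∈ Ω_{r,1}} ‖s(u)‖ = sup_{u ∈ S} ‖s(u)‖: the supremum of the norm of a holomorphic map over the closed annulus is attained on the outer unit sphere. -/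
/-!
Statement 7 (maximum principle on the annulus, Section 5.2 of the paper): for a holomorphic map
`s` on a neighbourhood of the closed annulus `Ω_{r,1} ⊆ ℂⁿ` (`n ≥ 2`) with values in a complex
Banach space, the supremum of `‖s‖` over the annulus is attained on the outer unit sphere.
-/

open Set Metric in
set_option maxHeartbeats 1000000 in
theorem stmt_7 (n : ℕ) (hn : 2 ≤ n) (r : ℝ) (hr0 : 0 < r) (hr1 : r < 1)
    {F : Type*} [NormedAddCommGroup F] [NormedSpace ℂ F] [CompleteSpace F]
    (U : Set (EuclideanSpace ℂ (Fin n))) (hU : IsOpen U)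
    (hΩU : {u : EuclideanSpace ℂ (Fin n) | r ≤ ‖u‖ ∧ ‖u‖ ≤ 1} ⊆ U)
    (s : EuclideanSpace ℂ (Fin n) → F) (hs : DifferentiableOn ℂ s U) :
    sSup ((fun u => ‖s u‖) '' {u : EuclideanSpace ℂ (Fin n) | r ≤ ‖u‖ ∧ ‖u‖ ≤ 1}) =
      sSup ((fun u => ‖s u‖) '' {u : EuclideanSpace ℂ (Fin n) | ‖u‖ = 1}) := by
  classical
  set A : Set (EuclideanSpace ℂ (Fin n)) := {u | r ≤ ‖u‖ ∧ ‖u‖ ≤ 1} with hA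
  set Sp : Set (EuclideanSpace ℂ (Fin n)) := {u | ‖u‖ = 1} with hSp
  have hSpA : Sp ⊆ A := fun u hu => ⟨hu ▸ hr1.le, hu.le⟩
  have hAclosed : IsClosed A := by
    have : A = (fun u : EuclideanSpace ℂ (Fin n) => ‖u‖) ⁻¹' Set.Icc r 1 := rfl
    rw [this]; exact isClosed_Icc.preimage continuous_norm
  have hAcpt : IsCompact A := by
    apply Metric.isCompact_of_isClosed_isBounded hAclosed
    apply Metric.isBounded_closedBall (x := (0 : EuclideanSpace ℂ (Fin n))) (r := 1) |>.subset
    intro u hu; simpa [mem_closedBall_zero_iff] using hu.2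
  have hcont : ContinuousOn (fun u => ‖s u‖) A :=
    (hs.continuousOn.mono hΩU).norm
  have hbddA : BddAbove ((fun u => ‖s u‖) '' A) :=
    (hAcpt.image_of_continuousOn hcont).bddAbove
  have hbddS : BddAbove ((fun u => ‖s u‖) '' Sp) :=
    hbddA.mono (Set.image_mono hSpA)
  have hnpos : 0 < n := by omega
  have he : (EuclideanSpace.single (⟨0, hnpos⟩ : Fin n) (1:ℂ)) ∈ Sp := by
    simp [hSp, EuclideanSpace.norm_single]
  have hSpne : Sp.Nonempty := ⟨_, he⟩
  have hAne : A.Nonempty := ⟨_, hSpA he⟩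
  set M := sSup ((fun u => ‖s u‖) '' Sp) with hM
  have key : ∀ u ∈ A, ‖s u‖ ≤ M := by
    intro u hu
    obtain ⟨hur, hu1⟩ := hu
    rcases eq_or_lt_of_le hu1 with h1 | h1
    · exact le_csSup hbddS ⟨u, h1, rfl⟩
    have hune : u ≠ 0 := by
      intro h
      rw [h, norm_zero] at hur
      linarith
    have hfin : Module.finrank ℂ (EuclideanSpace ℂ (Fin n)) = n := finrank_euclideanSpace_fin
    have hKne : (ℂ ∙ u)ᗮ ≠ ⊥ := by
      intro hbot
      have h1' := Submodule.finrank_add_finrank_orthogonal (K := (ℂ ∙ u))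
      rw [hfin, hbot] at h1'
      have h2' : Module.finrank ℂ (ℂ ∙ u) = 1 := finrank_span_singleton hune
      simp [h2'] at h1'
      omega
    obtain ⟨w, hwK, hw0⟩ := Submodule.exists_mem_ne_zero_of_ne_bot hKne
    have hwnorm : (0:ℝ) < ‖w‖ := norm_pos_iff.mpr hw0
    obtain ⟨a, ha, ha0⟩ : ∃ a : ℝ, ‖u‖ = a ∧ 0 ≤ a := ⟨_, rfl, norm_nonneg _⟩
    rw [ha] at hur h1
    set t : ℝ := Real.sqrt (1 - a ^ 2) with ht
    have ht0 : 0 ≤ t := Real.sqrt_nonneg _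
    have h1a : 0 ≤ 1 - a ^ 2 := by nlinarith
    have ht2 : t ^ 2 = 1 - a ^ 2 := Real.sq_sqrt h1a
    set w0 : EuclideanSpace ℂ (Fin n) := ((t / ‖w‖ : ℝ) : ℂ) • w with hw0def
    have hw0K : w0 ∈ (ℂ ∙ u)ᗮ := Submodule.smul_mem _ _ hwK
    have hw0norm : ‖w0‖ = t := by
      rw [hw0def, norm_smul,
        show ‖((t / ‖w‖ : ℝ) : ℂ)‖ = t / ‖w‖ by
          simp [abs_div, abs_of_nonneg ht0, abs_of_nonneg hwnorm.le]]
      field_simp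
    have hinner : ∀ z : ℂ, inner ℂ u (z • w0) = (0 : ℂ) := by
      intro z
      have := (Submodule.mem_orthogonal _ _).1 hw0K u (Submodule.mem_span_singleton_self u)
      rw [inner_smul_right, this, mul_zero]
    set φ : ℂ → EuclideanSpace ℂ (Fin n) := fun z => u + z • w0 with hφ
    have hφnorm : ∀ z : ℂ, ‖φ z‖ ^ 2 = a ^ 2 + ‖z‖ ^ 2 * t ^ 2 := by
      intro z
      have h := norm_add_sq_eq_norm_sq_add_norm_sq_of_inner_eq_zero u (z • w0) (hinner z)
      show ‖u + z • w0‖ ^ 2 = a ^ 2 + ‖z‖ ^ 2 * t ^ 2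
      rw [sq, sq, sq, h, norm_smul, hw0norm, ha]
      ring
    have hφmem : ∀ z ∈ closedBall (0:ℂ) 1, φ z ∈ A := by
      intro z hz
      rw [mem_closedBall_zero_iff] at hz
      obtain ⟨zn, hzn, hzn0⟩ : ∃ b : ℝ, ‖z‖ = b ∧ 0 ≤ b := ⟨_, rfl, norm_nonneg _⟩
      obtain ⟨b, hb, hb0⟩ : ∃ b : ℝ, ‖φ z‖ = b ∧ 0 ≤ b := ⟨_, rfl, norm_nonneg _⟩
      rw [hzn] at hz
      have hb2 : b ^ 2 = a ^ 2 + zn ^ 2 * t ^ 2 := by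
        rw [← hb, ← hzn]; exact hφnorm z
      rw [hA, Set.mem_setOf_eq, hb]
      rw [ht2] at hb2
      have hzn2 : zn ^ 2 ≤ 1 := by nlinarith
      constructor
      · nlinarith
      · nlinarith [mul_nonneg (sub_nonneg.2 hzn2) h1a]
    have hφdiff : Differentiable ℂ φ := (differentiable_id.smul_const w0).const_add u
    have hdon : DifferentiableOn ℂ (s ∘ φ) (closedBall (0:ℂ) 1) :=
      hs.comp hφdiff.differentiableOn (fun z hz => hΩU (hφmem z hz))
    have hd : DiffContOnCl ℂ (s ∘ φ) (ball (0:ℂ) 1) := by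
      apply DifferentiableOn.diffContOnCl
      rw [closure_ball (0:ℂ) one_ne_zero]
      exact hdon
    have hb : ∀ z ∈ frontier (ball (0:ℂ) 1), ‖(s ∘ φ) z‖ ≤ M := by
      intro z hz
      rw [frontier_ball (0:ℂ) one_ne_zero, mem_sphere_zero_iff_norm] at hz
      have h1' : ‖φ z‖ = 1 := by
        have h2 : ‖φ z‖ ^ 2 = 1 := by rw [hφnorm, hz, ht2]; ring
        nlinarith [norm_nonneg (φ z)]
      exact le_csSup hbddS ⟨φ z, h1', rfl⟩
    have hmax := Complex.norm_le_of_forall_mem_frontier_norm_le isBounded_ball hd hb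
      (z := 0) (by rw [closure_ball (0:ℂ) one_ne_zero]; exact mem_closedBall_self zero_le_one)
    have hφ0 : φ 0 = u := by simp [hφ]
    simpa [Function.comp, hφ0] using hmax
  apply le_antisymm
  · exact csSup_le (hAne.image _) (by rintro x ⟨u, hu, rfl⟩; exact key u hu)
  · exact csSup_le_csSup hbddA (hSpne.image _) (Set.image_mono hSpA)
end

section
/- Let n ≥ 2, k ≥ 1, 0 < r < 1, and let H be a continuous map from the closed annulus Ω_{r,1} ⊆ ℂⁿ to the positive-definite Hermitian k×k complex matrices. Then there exists a constant C ≥ 1, depending only on n, k, r and H, such that for every open neighborhood U ⊆ ℂⁿ of Ω_{r,1} and every holomorphic map s : U → ℂᵏ one has sup_{u ∈ Ω_{r,1}} √(s(u)ᴴ·H(u)·s(u)) ≤ C·sup_{u ∈ S} √(s(u)ᴴ·H(u)·s(u)). -/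
/-!
Statement 8 (Corollary 5.4 of the paper for the unperturbed holomorphic structure): given a
continuous positive-definite Hermitian fibre metric `H` on the closed annulus `Ω_{r,1} ⊆ ℂⁿ`
(`n ≥ 2`), there is a constant `C ≥ 1` such that every map `s` holomorphic on a neighbourhood
of the annulus satisfies `sup_{Ω_{r,1}} ‖s‖_H ≤ C · sup_S ‖s‖_H`.
-/

open scoped ComplexOrder

open Metric Complex
open scoped ComplexConjugate InnerProductSpace

set_option maxHeartbeats 1000000 in
lemma annulus_max_principle {n : ℕ} (hn : 2 ≤ n) {r : ℝ} (hr0 : 0 < r) (hr1 : r < 1)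
    {F : Type*} [NormedAddCommGroup F] [NormedSpace ℂ F]
    {U : Set (EuclideanSpace ℂ (Fin n))} (hU : IsOpen U)
    (hKU : {u : EuclideanSpace ℂ (Fin n) | r ≤ ‖u‖ ∧ ‖u‖ ≤ 1} ⊆ U)
    {s : EuclideanSpace ℂ (Fin n) → F} (hs : DifferentiableOn ℂ s U)
    {M : ℝ} (hM : ∀ w : EuclideanSpace ℂ (Fin n), ‖w‖ = 1 → ‖s w‖ ≤ M)
    {u : EuclideanSpace ℂ (Fin n)} (hur : r ≤ ‖u‖) (hu1 : ‖u‖ ≤ 1) : ‖s u‖ ≤ M := by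
  set t : ℝ := ‖u‖ with ht_def
  have ht : 0 < t := lt_of_lt_of_le hr0 hur
  have hu0 : u ≠ 0 := by intro h; rw [ht_def, h, norm_zero] at ht; exact lt_irrefl 0 ht
  clear_value t
  -- find a unit vector orthogonal to u
  obtain ⟨v, hv_mem, hv0⟩ : ∃ v ∈ (ℂ ∙ u)ᗮ, v ≠ 0 := by
    apply Submodule.exists_mem_ne_zero_of_ne_bot
    intro hbot
    have h1 : Module.finrank ℂ (ℂ ∙ u) = 1 := finrank_span_singleton hu0
    have h2 := Submodule.finrank_add_finrank_orthogonal (𝕜 := ℂ) (ℂ ∙ u)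
    rw [hbot] at h2
    simp [h1, finrank_euclideanSpace_fin] at h2
    omega
  set e : EuclideanSpace ℂ (Fin n) := ((‖v‖ : ℂ)⁻¹) • v with he_def
  have he1 : ‖e‖ = 1 := by
    rw [he_def, norm_smul]
    simp [norm_ne_zero_iff.mpr hv0, inv_mul_cancel₀]
  have heu : ⟪u, e⟫_ℂ = 0 := by
    have : ⟪u, v⟫_ℂ = 0 := by
      have := (Submodule.mem_orthogonal _ v).mp hv_mem u (Submodule.mem_span_singleton_self u)
      exact this
    rw [he_def, inner_smul_right, this, mul_zero]
  have hue : ⟪e, u⟫_ℂ = 0 := by rw [← inner_conj_symm, heu, map_zero]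
  clear_value e
  have huu : ⟪u, u⟫_ℂ = (t : ℂ)^2 := by
    rw [inner_self_eq_norm_sq_to_K, ← ht_def]; norm_cast
  have hee : ⟪e, e⟫_ℂ = 1 := by
    rw [inner_self_eq_norm_sq_to_K, he1]; norm_num
  set a : ℝ := Real.sqrt (t^2 - r^2) with ha_def
  have ha0 : 0 ≤ a := Real.sqrt_nonneg _
  have ha2 : a^2 = t^2 - r^2 := Real.sq_sqrt (by nlinarith)
  have ha2c : (a : ℂ)^2 = (t : ℂ)^2 - (r : ℂ)^2 := by exact_mod_cast congrArg (Complex.ofReal) ha2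
  clear_value a
  set e₂ : EuclideanSpace ℂ (Fin n) := ((r/t^2 : ℝ) : ℂ) • u + ((a/t : ℝ) : ℂ) • e with he2_def
  set e₁ : EuclideanSpace ℂ (Fin n) := ((a/t^2 : ℝ) : ℂ) • u + ((-(r/t) : ℝ) : ℂ) • e with he1_def
  clear_value e₁ e₂
  have htne : (t : ℂ) ≠ 0 := by exact_mod_cast ne_of_gt ht
  have hinner12 : ⟪e₁, e₂⟫_ℂ = 0 := by
    rw [he1_def, he2_def]
    simp only [inner_add_left, inner_add_right, inner_smul_left, inner_smul_right,
      huu, hee, heu, hue]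
    simp only [Complex.conj_ofReal, mul_zero, mul_one, add_zero, zero_add, Complex.ofReal_neg,
      Complex.ofReal_div]
    push_cast
    simp only [map_mul, map_div₀, map_neg, map_inv₀, map_pow, Complex.conj_ofReal]
    field_simp
    ring
  have hne1 : ‖e₁‖ = 1 := by
    have h := norm_add_sq_eq_norm_sq_add_norm_sq_of_inner_eq_zero
      (((a/t^2 : ℝ) : ℂ) • u) (((-(r/t) : ℝ) : ℂ) • e) (by
        rw [inner_smul_left, inner_smul_right, heu]; ring)
    rw [norm_smul, norm_smul, he1] at h
    have : ‖e₁‖^2 = 1 := by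
      rw [he1_def, pow_two, h]
      simp only [Complex.norm_real, Real.norm_eq_abs, mul_one]
      rw [_root_.abs_of_nonneg (by positivity : (0:ℝ) ≤ a/t^2), abs_neg, _root_.abs_of_nonneg (by positivity : (0:ℝ) ≤ r/t)]
      rw [← ht_def]
      field_simp
      nlinarith
    rw [← Real.sqrt_sq (norm_nonneg e₁), this, Real.sqrt_one]
  have hne2 : ‖e₂‖ = 1 := by
    have h := norm_add_sq_eq_norm_sq_add_norm_sq_of_inner_eq_zero
      (((r/t^2 : ℝ) : ℂ) • u) (((a/t : ℝ) : ℂ) • e) (by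
        rw [inner_smul_left, inner_smul_right, heu]; ring)
    rw [norm_smul, norm_smul, he1] at h
    have : ‖e₂‖^2 = 1 := by
      rw [he2_def, pow_two, h]
      simp only [Complex.norm_real, Real.norm_eq_abs, mul_one]
      rw [_root_.abs_of_nonneg (by positivity : (0:ℝ) ≤ r/t^2), _root_.abs_of_nonneg (by positivity : (0:ℝ) ≤ a/t)]
      rw [← ht_def]
      field_simp
      nlinarith [ha2]
    rw [← Real.sqrt_sq (norm_nonneg e₂), this, Real.sqrt_one]
  have hsum : (a : ℂ) • e₁ + (r : ℂ) • e₂ = u := by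
    have hcoef1 : (a : ℂ) * ((a/t^2 : ℝ) : ℂ) + (r : ℂ) * ((r/t^2 : ℝ) : ℂ) = 1 := by
      push_cast; field_simp; linear_combination ha2c
    have hcoef2 : (a : ℂ) * ((-(r/t) : ℝ) : ℂ) + (r : ℂ) * ((a/t : ℝ) : ℂ) = 0 := by
      push_cast; field_simp; ring
    rw [he1_def, he2_def, smul_add, smul_add, smul_smul, smul_smul, smul_smul, smul_smul,
      add_add_add_comm, ← add_smul, ← add_smul, hcoef1, hcoef2, one_smul, zero_smul, add_zero]
  set R : ℝ := Real.sqrt (1 - r^2) with hR_def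
  have hR0 : 0 < R := Real.sqrt_pos.mpr (by nlinarith)
  have hR2 : R^2 = 1 - r^2 := Real.sq_sqrt (by nlinarith)
  set g : ℂ → EuclideanSpace ℂ (Fin n) := fun z => z • e₁ + (r : ℂ) • e₂ with hg_def
  have hgnorm : ∀ z : ℂ, ‖g z‖^2 = ‖z‖^2 + r^2 := by
    intro z
    have horth : ⟪z • e₁, (r : ℂ) • e₂⟫_ℂ = 0 := by
      rw [inner_smul_left, inner_smul_right, hinner12]; ring
    have h := norm_add_sq_eq_norm_sq_add_norm_sq_of_inner_eq_zero _ _ horth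
    rw [norm_smul, norm_smul, hne1, hne2] at h
    have hg : g z = z • e₁ + (r : ℂ) • e₂ := rfl
    rw [hg, pow_two, h]
    simp only [Complex.norm_real, Real.norm_eq_abs, mul_one]
    rw [_root_.abs_of_nonneg hr0.le]
    ring
  have hmaps : ∀ z : ℂ, ‖z‖ ≤ R → r ≤ ‖g z‖ ∧ ‖g z‖ ≤ 1 := by
    intro z hz
    have h2 := hgnorm z
    constructor
    · nlinarith [norm_nonneg (g z), norm_nonneg z]
    · nlinarith [norm_nonneg (g z), norm_nonneg z]
  have hdiff_g : Differentiable ℂ g := by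
    rw [hg_def]
    exact (differentiable_id.smul_const e₁).add_const _
  have hclosure : closure (ball (0:ℂ) R) = closedBall 0 R := closure_ball 0 hR0.ne'
  have hfd : DiffContOnCl ℂ (s ∘ g) (ball (0:ℂ) R) := by
    apply DifferentiableOn.diffContOnCl
    rw [hclosure]
    apply hs.comp hdiff_g.differentiableOn
    intro z hz
    rw [mem_closedBall_zero_iff] at hz
    exact hKU ⟨(hmaps z hz).1, (hmaps z hz).2⟩
  have hbound : ∀ z ∈ frontier (ball (0:ℂ) R), ‖(s ∘ g) z‖ ≤ M := by
    intro z hz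
    rw [frontier_ball 0 hR0.ne'] at hz
    rw [mem_sphere_zero_iff_norm] at hz
    have h1 : ‖g z‖^2 = 1 := by rw [hgnorm z, hz]; nlinarith
    have h2 : ‖g z‖ = 1 := by
      rw [← Real.sqrt_sq (norm_nonneg (g z)), h1, Real.sqrt_one]
    exact hM (g z) h2
  have hmem : (a : ℂ) ∈ closure (ball (0:ℂ) R) := by
    rw [hclosure, mem_closedBall_zero_iff]
    have : ‖(a : ℂ)‖ = a := by
      rw [Complex.norm_real, Real.norm_eq_abs, _root_.abs_of_nonneg ha0]
    rw [this, ha_def, hR_def]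
    exact Real.sqrt_le_sqrt (by nlinarith)
  have hfin := Complex.norm_le_of_forall_mem_frontier_norm_le isBounded_ball hfd hbound hmem
  have hga : g (a : ℂ) = u := by
    have : g (a : ℂ) = (a : ℂ) • e₁ + (r : ℂ) • e₂ := rfl
    rw [this, hsum]
  rw [Function.comp_apply, hga] at hfin
  exact hfin

/-- The `H`-norm `√(s(u)ᴴ·H(u)·s(u))` of a vector of `ℂᵏ` with respect to a Hermitian matrix. -/
noncomputable def hermNorm {k : ℕ} (H : Matrix (Fin k) (Fin k) ℂ)
    (v : EuclideanSpace ℂ (Fin k)) : ℝ :=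
  Real.sqrt ((dotProduct (star fun i => v i) (H.mulVec fun i => v i)).re)

lemma hermNorm_smul {k : ℕ} (H : Matrix (Fin k) (Fin k) ℂ) (c : ℂ)
    (v : EuclideanSpace ℂ (Fin k)) : hermNorm H (c • v) = ‖c‖ * hermNorm H v := by
  unfold hermNorm
  have hv : (fun i => (c • v) i) = c • (fun i => v i) := rfl
  rw [hv, star_smul, Matrix.mulVec_smul, smul_dotProduct, dotProduct_smul]
  rw [smul_eq_mul, smul_eq_mul, ← mul_assoc]
  have hc : star c * c = ((‖c‖^2 : ℝ) : ℂ) := by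
    rw [RCLike.star_def, Complex.conj_mul']
    norm_cast
  rw [hc, Complex.re_ofReal_mul, Real.sqrt_mul (sq_nonneg _), Real.sqrt_sq (norm_nonneg c)]

lemma hermNorm_zero {k : ℕ} (H : Matrix (Fin k) (Fin k) ℂ) : hermNorm H 0 = 0 := by
  unfold hermNorm
  rw [show (fun i => (0 : EuclideanSpace ℂ (Fin k)) i) = (0 : Fin k → ℂ) from rfl]
  simp

lemma herm_comparison {n k : ℕ} (hn : 1 ≤ n) (hk : 1 ≤ k) {r : ℝ} (hr0 : 0 < r) (hr1 : r < 1)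
    (H : EuclideanSpace ℂ (Fin n) → Matrix (Fin k) (Fin k) ℂ)
    (hHcont : ContinuousOn H {u : EuclideanSpace ℂ (Fin n) | r ≤ ‖u‖ ∧ ‖u‖ ≤ 1})
    (hHpos : ∀ u : EuclideanSpace ℂ (Fin n), r ≤ ‖u‖ → ‖u‖ ≤ 1 → (H u).PosDef) :
    ∃ c₁ c₂ : ℝ, 0 < c₁ ∧ 0 < c₂ ∧
      ∀ u : EuclideanSpace ℂ (Fin n), r ≤ ‖u‖ → ‖u‖ ≤ 1 →
        ∀ v : EuclideanSpace ℂ (Fin k),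
          c₁ * ‖v‖ ≤ hermNorm (H u) v ∧ hermNorm (H u) v ≤ c₂ * ‖v‖ := by
  classical
  set K := {u : EuclideanSpace ℂ (Fin n) | r ≤ ‖u‖ ∧ ‖u‖ ≤ 1} with hK_def
  have hKclosed : IsClosed K := by
    have : K = (fun u : EuclideanSpace ℂ (Fin n) => ‖u‖) ⁻¹' (Set.Icc r 1) := rfl
    rw [this]; exact isClosed_Icc.preimage continuous_norm
  have hKcompact : IsCompact K := by
    apply Metric.isCompact_of_isClosed_isBounded hKclosed
    apply Bornology.IsBounded.subset (Metric.isBounded_closedBall (x := (0 : EuclideanSpace ℂ (Fin n))) (r := 1))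
    intro u hu; rw [Metric.mem_closedBall, dist_zero_right]; exact hu.2
  have hScompact : IsCompact (Metric.sphere (0 : EuclideanSpace ℂ (Fin k)) 1) := isCompact_sphere 0 1
  set A := K ×ˢ Metric.sphere (0 : EuclideanSpace ℂ (Fin k)) 1 with hA_def
  have hA : IsCompact A := hKcompact.prod hScompact
  have hAne : A.Nonempty := by
    refine ⟨(EuclideanSpace.single ⟨0, hn⟩ (1:ℂ), EuclideanSpace.single ⟨0, hk⟩ (1:ℂ)),
      ⟨⟨?_, ?_⟩, ?_⟩⟩
    · rw [EuclideanSpace.norm_single]; norm_num; exact hr1.le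
    · rw [EuclideanSpace.norm_single]; norm_num
    · rw [mem_sphere_zero_iff_norm, EuclideanSpace.norm_single]; norm_num
  set Q : EuclideanSpace ℂ (Fin n) × EuclideanSpace ℂ (Fin k) → ℝ :=
    fun p => (dotProduct (star fun i => p.2 i) ((H p.1).mulVec fun i => p.2 i)).re
    with hQ_def
  have hQcont : ContinuousOn Q A := by
    apply Complex.continuous_re.comp_continuousOn
    have hfeq : (fun p : EuclideanSpace ℂ (Fin n) × EuclideanSpace ℂ (Fin k) =>
        dotProduct (star fun i => p.2 i) ((H p.1).mulVec fun i => p.2 i)) =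
        fun p => ∑ i, ∑ j, (starRingEnd ℂ) (p.2 i) * (H p.1 i j * p.2 j) := by
      funext p
      simp [dotProduct, Matrix.mulVec, Finset.mul_sum, Pi.star_apply, RCLike.star_def]
    rw [hfeq]
    apply continuousOn_finset_sum
    intro i _
    apply continuousOn_finset_sum
    intro j _
    apply ContinuousOn.mul
    · apply Continuous.continuousOn
      exact Complex.continuous_conj.comp ((EuclideanSpace.proj i).continuous.comp continuous_snd)
    · apply ContinuousOn.mul
      · have hH1 : ContinuousOn (fun p : EuclideanSpace ℂ (Fin n) × EuclideanSpace ℂ (Fin k) =>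
            H p.1) A := hHcont.comp continuousOn_fst (fun p hp => hp.1)
        exact ((continuous_apply j).comp (continuous_apply i)).comp_continuousOn hH1
      · exact ((EuclideanSpace.proj j).continuous.comp continuous_snd).continuousOn
  have hQpos : ∀ p ∈ A, 0 < Q p := by
    rintro ⟨u, v⟩ ⟨huK, hv⟩
    have hvne : (fun i => v i) ≠ 0 := by
      intro h0
      have hv0 : v = 0 := by ext i; exact congrFun h0 i
      rw [mem_sphere_zero_iff_norm, hv0] at hv; simp at hv
    have hlt := (hHpos u huK.1 huK.2).dotProduct_mulVec_pos hvne
    rw [Complex.lt_def] at hlt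
    simpa [hQ_def] using hlt.1
  obtain ⟨p₁, hp₁A, hp₁min⟩ := hA.exists_isMinOn hAne hQcont
  obtain ⟨p₂, hp₂A, hp₂max⟩ := hA.exists_isMaxOn hAne hQcont
  refine ⟨Real.sqrt (Q p₁), Real.sqrt (Q p₂), Real.sqrt_pos.mpr (hQpos p₁ hp₁A),
    Real.sqrt_pos.mpr (hQpos p₂ hp₂A), ?_⟩
  intro u hur hu1 v
  rcases eq_or_ne v 0 with hv0 | hv0
  · rw [hv0, hermNorm_zero, norm_zero, mul_zero, mul_zero]
    exact ⟨le_refl 0, le_refl 0⟩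
  · have hvn : ‖v‖ ≠ 0 := norm_ne_zero_iff.mpr hv0
    set w : EuclideanSpace ℂ (Fin k) := ((‖v‖ : ℂ))⁻¹ • v with hw_def
    have hwnorm : ‖w‖ = 1 := by
      rw [hw_def, norm_smul, norm_inv, Complex.norm_real, Real.norm_eq_abs,
        _root_.abs_of_nonneg (norm_nonneg v), inv_mul_cancel₀ hvn]
    have hvw : v = ((‖v‖ : ℂ)) • w := by
      rw [hw_def, smul_inv_smul₀ (by exact_mod_cast hvn)]
    have hherm : hermNorm (H u) v = ‖v‖ * hermNorm (H u) w := by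
      conv_lhs => rw [hvw]
      rw [hermNorm_smul, Complex.norm_real, Real.norm_eq_abs, _root_.abs_of_nonneg (norm_nonneg v)]
    have hwA : (u, w) ∈ A := ⟨⟨hur, hu1⟩, mem_sphere_zero_iff_norm.mpr hwnorm⟩
    have hQw : hermNorm (H u) w = Real.sqrt (Q (u, w)) := rfl
    have hmin := hp₁min hwA
    have hmax := hp₂max hwA
    constructor
    · rw [hherm, hQw, mul_comm (Real.sqrt (Q p₁)) ‖v‖]
      exact mul_le_mul_of_nonneg_left (Real.sqrt_le_sqrt hmin) (norm_nonneg v)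
    · rw [hherm, hQw, mul_comm (Real.sqrt (Q p₂)) ‖v‖]
      exact mul_le_mul_of_nonneg_left (Real.sqrt_le_sqrt hmax) (norm_nonneg v)

theorem stmt_8 (n k : ℕ) (hn : 2 ≤ n) (hk : 1 ≤ k) (r : ℝ) (hr0 : 0 < r) (hr1 : r < 1)
    (H : EuclideanSpace ℂ (Fin n) → Matrix (Fin k) (Fin k) ℂ)
    (hHcont : ContinuousOn H {u : EuclideanSpace ℂ (Fin n) | r ≤ ‖u‖ ∧ ‖u‖ ≤ 1})
    (hHpos : ∀ u : EuclideanSpace ℂ (Fin n), r ≤ ‖u‖ → ‖u‖ ≤ 1 → (H u).PosDef) :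
    ∃ C : ℝ, 1 ≤ C ∧
      ∀ (U : Set (EuclideanSpace ℂ (Fin n))), IsOpen U →
        {u : EuclideanSpace ℂ (Fin n) | r ≤ ‖u‖ ∧ ‖u‖ ≤ 1} ⊆ U →
        ∀ s : EuclideanSpace ℂ (Fin n) → EuclideanSpace ℂ (Fin k),
          DifferentiableOn ℂ s U →
          sSup ((fun u => hermNorm (H u) (s u)) ''
              {u : EuclideanSpace ℂ (Fin n) | r ≤ ‖u‖ ∧ ‖u‖ ≤ 1}) ≤
            C * sSup ((fun u => hermNorm (H u) (s u)) ''
              {u : EuclideanSpace ℂ (Fin n) | ‖u‖ = 1}) := by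
  obtain ⟨c₁, c₂, hc₁, hc₂, hcomp⟩ :=
    herm_comparison (by omega : 1 ≤ n) hk hr0 hr1 H hHcont hHpos
  refine ⟨max 1 (c₂ / c₁), le_max_left _ _, ?_⟩
  intro U hU hKU s hs
  set C := max 1 (c₂ / c₁) with hC_def
  set Φ : EuclideanSpace ℂ (Fin n) → ℝ := fun u => hermNorm (H u) (s u) with hΦ_def
  set S := {u : EuclideanSpace ℂ (Fin n) | ‖u‖ = 1} with hS_def
  set K := {u : EuclideanSpace ℂ (Fin n) | r ≤ ‖u‖ ∧ ‖u‖ ≤ 1} with hK_def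
  have hSsub : S ⊆ K := fun u hu => ⟨by rw [hu]; exact hr1.le, le_of_eq hu⟩
  have hSsphere : S = Metric.sphere (0 : EuclideanSpace ℂ (Fin n)) 1 := by
    ext u; rw [mem_sphere_zero_iff_norm]; rfl
  have hScompact : IsCompact S := by rw [hSsphere]; exact isCompact_sphere 0 1
  have hSne : S.Nonempty := by
    refine ⟨EuclideanSpace.single ⟨0, by omega⟩ (1:ℂ), ?_⟩
    show ‖_‖ = 1
    rw [EuclideanSpace.norm_single]; norm_num
  -- bound on ‖s‖ over S
  obtain ⟨M₀, hM₀⟩ := hScompact.exists_bound_of_continuousOn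
    ((hs.continuousOn).mono (Set.Subset.trans hSsub hKU))
  -- hermNorm image on S is bounded above
  have hbddS : BddAbove (Φ '' S) := by
    refine ⟨c₂ * M₀, ?_⟩
    rintro y ⟨w, hw, rfl⟩
    calc Φ w ≤ c₂ * ‖s w‖ := (hcomp w (hSsub hw).1 (hSsub hw).2 (s w)).2
      _ ≤ c₂ * M₀ := mul_le_mul_of_nonneg_left (hM₀ w hw) hc₂.le
  set MS := sSup (Φ '' S) with hMS_def
  have hΦle : ∀ w ∈ S, Φ w ≤ MS := fun w hw => le_csSup hbddS ⟨w, hw, rfl⟩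
  have hMS0 : 0 ≤ MS := by
    obtain ⟨w, hw⟩ := hSne
    exact le_trans (Real.sqrt_nonneg _) (hΦle w hw)
  -- bound ‖s w‖ on the sphere
  have hsbound : ∀ w : EuclideanSpace ℂ (Fin n), ‖w‖ = 1 → ‖s w‖ ≤ MS / c₁ := by
    intro w hw
    have h1 := (hcomp w (hSsub hw).1 (hSsub hw).2 (s w)).1
    have h2 := hΦle w hw
    rw [le_div_iff₀ hc₁]
    calc ‖s w‖ * c₁ = c₁ * ‖s w‖ := mul_comm _ _
      _ ≤ Φ w := h1
      _ ≤ MS := h2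
  -- maximum principle
  have hmax : ∀ u : EuclideanSpace ℂ (Fin n), r ≤ ‖u‖ → ‖u‖ ≤ 1 → ‖s u‖ ≤ MS / c₁ :=
    fun u hur hu1 => annulus_max_principle hn hr0 hr1 hU hKU hs hsbound hur hu1
  -- conclude
  have hKne : K.Nonempty := hSne.mono hSsub
  apply csSup_le (hKne.image Φ)
  rintro y ⟨u, hu, rfl⟩
  calc Φ u ≤ c₂ * ‖s u‖ := (hcomp u hu.1 hu.2 (s u)).2
    _ ≤ c₂ * (MS / c₁) := mul_le_mul_of_nonneg_left (hmax u hu.1 hu.2) hc₂.le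
    _ = (c₂ / c₁) * MS := by ring
    _ ≤ C * MS := mul_le_mul_of_nonneg_right (le_max_right _ _) hMS0
end

section
/- Let n ≥ 2 and 0 < r < 1, and let f : Ω_{r,1} → ℝ be a continuous function with the following circle-maximum property: for every u ∈ Ω_{r,1}, every v ∈ ℂⁿ and every ρ > 0 such that the closed disk {u + t·v : |t| ≤ ρ} is contained in Ω_{r,1}, one has f(u) ≤ sup_{|t| = ρ} f(u + t·v). Then sup_{u ∈ Ω_{r,1}} f(u) = sup_{u ∈ S} f(u). -/
/-!
Statement 10 (abstract maximum principle on the annulus, skeleton of the proof of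
Proposition 5.3 of the paper): a continuous function on the closed annulus `Ω_{r,1} ⊆ ℂⁿ`
(`n ≥ 2`) satisfying the circle-maximum property on every closed complex disk contained in the
annulus attains its supremum on the outer unit sphere.
-/

open Module

theorem stmt_10 (n : ℕ) (hn : 2 ≤ n) (r : ℝ) (hr0 : 0 < r) (hr1 : r < 1)
    (f : EuclideanSpace ℂ (Fin n) → ℝ)
    (hcont : ContinuousOn f {u : EuclideanSpace ℂ (Fin n) | r ≤ ‖u‖ ∧ ‖u‖ ≤ 1})
    -- circle-maximum property on closed disks contained in the annulus
    (hmax : ∀ u : EuclideanSpace ℂ (Fin n), r ≤ ‖u‖ → ‖u‖ ≤ 1 →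
      ∀ v : EuclideanSpace ℂ (Fin n), ∀ ρ : ℝ, 0 < ρ →
        (∀ t : ℂ, ‖t‖ ≤ ρ → r ≤ ‖u + t • v‖ ∧ ‖u + t • v‖ ≤ 1) →
        f u ≤ sSup ((fun t : ℂ => f (u + t • v)) '' {t : ℂ | ‖t‖ = ρ})) :
    sSup (f '' {u : EuclideanSpace ℂ (Fin n) | r ≤ ‖u‖ ∧ ‖u‖ ≤ 1}) =
      sSup (f '' {u : EuclideanSpace ℂ (Fin n) | ‖u‖ = 1}) := by
  set A : Set (EuclideanSpace ℂ (Fin n)) := {u | r ≤ ‖u‖ ∧ ‖u‖ ≤ 1} with hA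
  set S : Set (EuclideanSpace ℂ (Fin n)) := {u | ‖u‖ = 1} with hS
  have hSA : S ⊆ A := fun u hu => ⟨by rw [Set.mem_setOf_eq.mp hu]; exact hr1.le,
    (Set.mem_setOf_eq.mp hu).le⟩
  -- compactness
  have hScl : S = Metric.sphere (0 : EuclideanSpace ℂ (Fin n)) 1 := by
    ext u; simp [hS, Metric.mem_sphere, dist_zero_right]
  have hScompact : IsCompact S := hScl ▸ isCompact_sphere 0 1
  have hAclosed : IsClosed A := by
    have h1 : IsClosed {u : EuclideanSpace ℂ (Fin n) | r ≤ ‖u‖} :=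
      isClosed_le continuous_const continuous_norm
    have h2 : IsClosed {u : EuclideanSpace ℂ (Fin n) | ‖u‖ ≤ 1} :=
      isClosed_le continuous_norm continuous_const
    exact h1.inter h2
  have hAcompact : IsCompact A := by
    refine (isCompact_closedBall (0 : EuclideanSpace ℂ (Fin n)) 1).of_isClosed_subset hAclosed ?_
    intro u hu
    simpa [Metric.mem_closedBall, dist_zero_right] using hu.2
  -- nonempty
  have hSne : S.Nonempty := by
    refine ⟨EuclideanSpace.single ⟨0, by omega⟩ (1 : ℂ), ?_⟩
    simp [hS, EuclideanSpace.norm_single]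
  have hAne : A.Nonempty := ⟨_, hSA hSne.choose_spec⟩
  have hbddS : BddAbove (f '' S) :=
    (hScompact.image_of_continuousOn (hcont.mono hSA)).bddAbove
  have hbddA : BddAbove (f '' A) := (hAcompact.image_of_continuousOn hcont).bddAbove
  refine le_antisymm ?_ (csSup_le_csSup hbddA (hSne.image f) (Set.image_mono hSA))
  refine csSup_le (hAne.image f) ?_
  rintro b ⟨u, hu, rfl⟩
  rcases eq_or_lt_of_le hu.2 with h1 | h1
  · exact le_csSup hbddS ⟨u, h1, rfl⟩
  -- find unit w orthogonal to u
  have hu0 : u ≠ 0 := by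
    have h1 := hu.1
    intro h
    rw [h, norm_zero] at h1
    linarith
  obtain ⟨w, hw1, hwo⟩ : ∃ w : EuclideanSpace ℂ (Fin n), ‖w‖ = 1 ∧ (inner ℂ u w : ℂ) = 0 := by
    have hfin : finrank ℂ (ℂ ∙ u) + finrank ℂ (ℂ ∙ u)ᗮ = n := by
      simpa using Submodule.finrank_add_finrank_orthogonal (ℂ ∙ u)
    have hrk1 : finrank ℂ (ℂ ∙ u) = 1 := finrank_span_singleton hu0
    have hpos : (ℂ ∙ u)ᗮ ≠ ⊥ := by
      intro h; rw [h] at hfin; simp [hrk1] at hfin; omega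
    obtain ⟨v, hv, hv0⟩ := Submodule.exists_mem_ne_zero_of_ne_bot hpos
    refine ⟨((‖v‖ : ℂ)⁻¹) • v, ?_, ?_⟩
    · simp [norm_smul, inv_mul_cancel₀ (norm_ne_zero_iff.mpr hv0)]
    · have h0 := (Submodule.mem_orthogonal _ v).mp hv u (Submodule.mem_span_singleton_self u)
      rw [inner_smul_right, h0, mul_zero]
  set ρ : ℝ := Real.sqrt (1 - ‖u‖ ^ 2) with hρ
  have hρpos : 0 < ρ := Real.sqrt_pos.mpr (by nlinarith [norm_nonneg u])
  have hρsq : ρ ^ 2 = 1 - ‖u‖ ^ 2 := Real.sq_sqrt (by nlinarith [norm_nonneg u])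
  have hnormsq : ∀ t : ℂ, ‖u + t • w‖ ^ 2 = ‖u‖ ^ 2 + ‖t‖ ^ 2 := by
    intro t
    have h : (inner ℂ u (t • w) : ℂ) = 0 := by rw [inner_smul_right, hwo, mul_zero]
    rw [norm_add_sq (𝕜 := ℂ), h]
    simp [norm_smul, mul_pow, hw1]
  have hdisk : ∀ t : ℂ, ‖t‖ ≤ ρ → r ≤ ‖u + t • w‖ ∧ ‖u + t • w‖ ≤ 1 := by
    intro t ht
    have h2 := hnormsq t
    have htn : 0 ≤ ‖t‖ := norm_nonneg t
    have hx : 0 ≤ ‖u + t • w‖ := norm_nonneg _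
    constructor
    · nlinarith [hu.1]
    · nlinarith
  have hcircle : ∀ t : ℂ, ‖t‖ = ρ → ‖u + t • w‖ = 1 := by
    intro t ht
    have h2 := hnormsq t
    rw [ht, hρsq] at h2
    have hx : 0 ≤ ‖u + t • w‖ := norm_nonneg _
    nlinarith
  have hfu := hmax u hu.1 hu.2 w ρ hρpos hdisk
  refine hfu.trans (csSup_le_csSup hbddS ?_ ?_)
  · exact ⟨f (u + (ρ : ℂ) • w), ⟨(ρ : ℂ), by simp [abs_of_pos hρpos], rfl⟩⟩
  · rintro b ⟨t, ht, rfl⟩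
    exact ⟨u + t • w, hcircle t ht, rfl⟩
end
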